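/- Let n ≥ 3 and let P be n points equally spaced on the unit circle. If G is a geometric t-spanner on P with t < 2, then G contains every edge of the convex hull of P (i.e., every edge {p_i, p_{i+1}} between consecutive points). -/

import Mathlib

open Real SimpleGraph

/-- The `i`-th of the `n` points equally spaced on the unit circle in the Euclidean
plane, `p_i = (sin(2πi/n), cos(2πi/n))`. -/
noncomputable def circlePt (n : ℕ) (i : ℕ) : EuclideanSpace ℝ (Fin 2) :=
  (WithLp.equiv 2 (Fin 2 → ℝ)).symm
    ![sin (2 * π * i / n), cos (2 * π * i / n)]

/-- The Euclidean length of a walk in a geometric graph on the circle points. -/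
noncomputable def walkLength {n : ℕ} {G : SimpleGraph (Fin n)} {u v : Fin n}
    (w : G.Walk u v) : ℝ :=
  (w.darts.map fun d => dist (circlePt n d.fst) (circlePt n d.snd)).sum

lemma dist_circlePt (n a b : ℕ) :
    dist (circlePt n a) (circlePt n b) = 2 * |Real.sin (π * ((a:ℝ) - b) / n)| := by
  have hA : dist (circlePt n a) (circlePt n b)
      = Real.sqrt ((Real.sin (2*π*a/n) - Real.sin (2*π*b/n))^2
        + (Real.cos (2*π*a/n) - Real.cos (2*π*b/n))^2) := by
    rw [EuclideanSpace.dist_eq]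
    simp [circlePt, Fin.sum_univ_two, Real.dist_eq, sq_abs]
  rw [hA]
  set A := 2*π*(a:ℝ)/n with hAdef
  set B := 2*π*(b:ℝ)/n with hBdef
  have key : (sin A - sin B)^2 + (cos A - cos B)^2 = (2 * sin ((A-B)/2))^2 := by
    have h1 : cos (A - B) = cos A * cos B + sin A * sin B := Real.cos_sub A B
    have h2 : sin ((A-B)/2)^2 = 1/2 - cos (A - B) / 2 := by
      have := Real.sin_sq_eq_half_sub ((A-B)/2)
      rwa [show 2 * ((A-B)/2) = A - B by ring] at this
    have h3 : sin A ^2 + cos A ^2 = 1 := Real.sin_sq_add_cos_sq A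
    have h4 : sin B ^2 + cos B ^2 = 1 := Real.sin_sq_add_cos_sq B
    nlinarith [h1, h2, h3, h4]
  rw [key, Real.sqrt_sq_eq_abs, abs_mul]
  have : (A - B)/2 = π * ((a:ℝ) - b) / n := by
    rw [hAdef, hBdef]; ring
  rw [this]
  norm_num

lemma circlePt_mod (n k : ℕ) (hn : 0 < n) : circlePt n (k % n) = circlePt n k := by
  have hne : (n:ℝ) ≠ 0 := Nat.cast_ne_zero.mpr hn.ne'
  have hk : (k:ℝ) = (k % n : ℕ) + (k / n : ℕ) * n := by
    conv_lhs => rw [← Nat.mod_add_div k n]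
    push_cast; ring
  have hang : 2*π*(k:ℝ)/n = 2*π*((k % n : ℕ):ℝ)/n + (k / n : ℕ) * (2*π) := by
    field_simp [hk]; linear_combination hk
  unfold circlePt
  congr 1
  ext x
  fin_cases x <;> simp [hang, Real.sin_add_nat_mul_two_pi, Real.cos_add_nat_mul_two_pi]

lemma chord_ge (n d : ℕ) (hn : 2 ≤ n) (hd1 : 1 ≤ d) (hd2 : d ≤ n - 1) :
    Real.sin (π/n) ≤ Real.sin (π*d/n) := by
  have hnR : (0:ℝ) < n := by positivity
  have hπ := Real.pi_pos
  have key : ∀ m : ℕ, 1 ≤ m → 2*m ≤ n → Real.sin (π/n) ≤ Real.sin (π*m/n) := by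
    intro m hm1 hm2
    apply Real.sin_le_sin_of_le_of_le_pi_div_two
    · have : (0:ℝ) < π/n := by positivity
      linarith
    · rw [div_le_div_iff₀ hnR (by norm_num : (0:ℝ) < 2)]
      have : (2:ℝ)*m ≤ n := by exact_mod_cast hm2
      nlinarith
    · rw [div_le_div_iff₀ hnR hnR]
      have h1 : (1:ℝ) ≤ m := by exact_mod_cast hm1
      nlinarith [mul_pos hπ hnR, mul_nonneg (mul_nonneg hπ.le hnR.le) (sub_nonneg.mpr h1)]
  rcases le_or_gt (2*d) n with h | h
  · exact key d hd1 h
  · have hdn : d ≤ n := by omega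
    have heq : π*(d:ℝ)/n = π - π*((n-d:ℕ):ℝ)/n := by
      have : ((n-d:ℕ):ℝ) = (n:ℝ) - d := by
        have := Nat.cast_sub hdn (R := ℝ); linarith [this]
      rw [this]; field_simp; ring
    rw [heq, Real.sin_pi_sub]
    exact key (n-d) (by omega) (by omega)

lemma sin_pi_div_pos (n : ℕ) (hn : 2 ≤ n) : 0 < Real.sin (π/n) := by
  have hπ := Real.pi_pos
  have hnR : (0:ℝ) < n := by positivity
  apply Real.sin_pos_of_pos_of_lt_pi
  · positivity
  · rw [div_lt_iff₀ hnR]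
    have : (2:ℝ) ≤ n := by exact_mod_cast hn
    nlinarith

lemma dist_circlePt_ge (n : ℕ) (hn : 2 ≤ n) (a b : ℕ) (ha : a < n) (hb : b < n)
    (hab : a ≠ b) : 2 * Real.sin (π/n) ≤ dist (circlePt n a) (circlePt n b) := by
  have main : ∀ a b : ℕ, a < n → b < n → b < a →
      2 * Real.sin (π/n) ≤ dist (circlePt n a) (circlePt n b) := by
    intro a b ha hb hba
    rw [dist_circlePt]
    set d := a - b with hd
    have hcast : (a:ℝ) - b = (d:ℕ) := by
      rw [hd]; have : b ≤ a := hba.le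
      push_cast [Nat.cast_sub this]; ring
    rw [hcast]
    have h1 : Real.sin (π/n) ≤ Real.sin (π*d/n) := chord_ge n d hn (by omega) (by omega)
    have h2 : 0 < Real.sin (π/n) := sin_pi_div_pos n hn
    rw [abs_of_nonneg (by linarith)]
    linarith
  rcases lt_or_gt_of_ne hab with h | h
  · rw [dist_comm (circlePt n a) (circlePt n b)]; exact main b a hb ha h
  · exact main a b ha hb h

lemma walkLength_nonneg {n : ℕ} {G : SimpleGraph (Fin n)} {u v : Fin n}
    (w : G.Walk u v) : 0 ≤ walkLength w := by
  apply List.sum_nonneg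
  intro x hx
  simp only [List.mem_map] at hx
  obtain ⟨d, _, rfl⟩ := hx
  exact dist_nonneg

/-- Let `n ≥ 3` and `P` be the `n` points equally spaced on the unit
circle. If `G` is a geometric `t`-spanner on `P` with `t < 2`, then `G` contains every
edge of the convex hull of `P`, i.e. every edge `{p_i, p_{i+1}}` between consecutive
points. -/
theorem spanner_contains_hull_edges (n : ℕ) (hn : 3 ≤ n)
    (G : SimpleGraph (Fin n)) (t : ℝ) (ht : t < 2)
    (hspan : ∀ u v : Fin n, ∃ w : G.Walk u v,
      walkLength w ≤ t * dist (circlePt n u) (circlePt n v)) :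
    ∀ i j : Fin n, (j : ℕ) = ((i : ℕ) + 1) % n → G.Adj i j := by
  intro i j hij
  by_contra hadj
  obtain ⟨w, hw⟩ := hspan i j
  have hn0 : 0 < n := by omega
  have hsin : 0 < Real.sin (π/n) := sin_pi_div_pos n (by omega)
  -- the consecutive distance equals 2 sin(π/n)
  have hD : dist (circlePt n (i:ℕ)) (circlePt n (j:ℕ)) = 2 * Real.sin (π/n) := by
    have hj' : circlePt n (j:ℕ) = circlePt n ((i:ℕ)+1) := by
      rw [hij]; exact circlePt_mod n _ hn0
    rw [hj', dist_circlePt]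
    have h1 : ((i:ℕ):ℝ) - (((i:ℕ)+1 : ℕ):ℝ) = -1 := by push_cast; ring
    rw [h1, show π * (-1) / (n:ℝ) = -(π/n) by ring, Real.sin_neg, abs_neg,
      abs_of_nonneg hsin.le]
  cases w with
  | nil =>
    have h1 := i.isLt
    rcases Nat.lt_or_ge ((i:ℕ)+1) n with hlt | hge
    · rw [Nat.mod_eq_of_lt hlt] at hij; omega
    · have h2 : (i:ℕ)+1 = n := by omega
      rw [h2, Nat.mod_self] at hij; omega
  | @cons _ b _ h p =>
    cases p with
    | nil => exact hadj h
    | @cons _ c _ h' q =>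
      have e1 : 2 * Real.sin (π/n) ≤ dist (circlePt n (i:ℕ)) (circlePt n (b:ℕ)) :=
        dist_circlePt_ge n (by omega) _ _ i.isLt b.isLt
          (fun hh => h.ne (Fin.val_injective hh))
      have e2 : 2 * Real.sin (π/n) ≤ dist (circlePt n (b:ℕ)) (circlePt n (c:ℕ)) :=
        dist_circlePt_ge n (by omega) _ _ b.isLt c.isLt
          (fun hh => h'.ne (Fin.val_injective hh))
      have e3 : 0 ≤ walkLength q := walkLength_nonneg q
      have hwl : walkLength (Walk.cons h (Walk.cons h' q))
          = dist (circlePt n (i:ℕ)) (circlePt n (b:ℕ))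
            + (dist (circlePt n (b:ℕ)) (circlePt n (c:ℕ)) + walkLength q) := by
        simp [walkLength]
      rw [hwl, hD] at hw
      nlinarith [hsin]
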